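/- Suppose J satisfies the Bellman inequality J(x) ≥ c(x, π(x)) + J(f(x, π(x))) for a feedback policy π, with J ≥ 0, J(0) = 0, J continuous, positive definite, and radially unbounded, and c(x,u) ≥ α(‖x‖) for a class-K function α. Then the closed-loop system x_{t+1} = f(x_t, π(x_t)) is globally asymptotically stable at the origin. -/

import Mathlib

/-- a nonnegative, continuous, positive definite, radially unbounded
`J` satisfying the Bellman inequality along a feedback policy `π`, with stage cost
dominating a class-K function of the state norm, renders the closed loop
`x_{t+1} = f(x_t, π(x_t))` globally asymptotically stable at the origin:
all trajectories converge to `0`, and the origin is Lyapunov stable. -/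
theorem bellman_inequality_implies_gas {n p : ℕ}
    (f : (Fin n → ℝ) → (Fin p → ℝ) → (Fin n → ℝ))
    (c : (Fin n → ℝ) → (Fin p → ℝ) → ℝ)
    (π : (Fin n → ℝ) → (Fin p → ℝ))
    (J : (Fin n → ℝ) → ℝ)
    (α : ℝ → ℝ)
    (hf0 : f 0 (π 0) = 0)
    (hJcont : Continuous J) (hJ0 : J 0 = 0)
    (hJnn : ∀ x, 0 ≤ J x) (hJpos : ∀ x, x ≠ 0 → 0 < J x)
    (hJrad : Filter.Tendsto J (Filter.cocompact (Fin n → ℝ)) Filter.atTop)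
    (hα0 : α 0 = 0)
    (hαcont : ContinuousOn α (Set.Ici 0))
    (hαmono : StrictMonoOn α (Set.Ici 0))
    (hcα : ∀ x u, α ‖x‖ ≤ c x u)
    (hBell : ∀ x, c x (π x) + J (f x (π x)) ≤ J x) :
    (∀ x0 : Fin n → ℝ,
        Filter.Tendsto (fun t => (fun y => f y (π y))^[t] x0) Filter.atTop (nhds 0)) ∧
    (∀ ε : ℝ, 0 < ε → ∃ δ : ℝ, 0 < δ ∧ ∀ x0 : Fin n → ℝ, ‖x0‖ < δ →
        ∀ t : ℕ, ‖(fun y => f y (π y))^[t] x0‖ < ε) := by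
  set F : (Fin n → ℝ) → (Fin n → ℝ) := fun y => f y (π y) with hFdef
  have hα_nn : ∀ t : ℝ, 0 ≤ t → 0 ≤ α t := by
    intro t ht
    have := hαmono.monotoneOn Set.self_mem_Ici (Set.mem_Ici.mpr ht) ht
    simpa [hα0] using this
  have hαpos : ∀ ε : ℝ, 0 < ε → 0 < α ε := by
    intro ε hε
    have := hαmono Set.self_mem_Ici (Set.mem_Ici.mpr hε.le) hε
    simpa [hα0] using this
  have hstep : ∀ x, J (F x) ≤ J x - α ‖x‖ := by
    intro x
    have h1 := hBell x
    have h2 := hcα x (π x)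
    simp only [hFdef]
    linarith
  have hkey : ∀ ε : ℝ, 0 < ε → ∀ x : Fin n → ℝ, α ‖x‖ < α ε → ‖x‖ < ε := by
    intro ε hε x h
    by_contra hc
    push_neg at hc
    exact absurd (hαmono.monotoneOn (Set.mem_Ici.mpr hε.le)
      (Set.mem_Ici.mpr (norm_nonneg x)) hc) (not_le.mpr h)
  have hmonoJ : ∀ x0 : Fin n → ℝ, ∀ t : ℕ, J (F^[t] x0) ≤ J x0 := by
    intro x0 t
    induction t with
    | zero => simp
    | succ k ih =>
      rw [Function.iterate_succ_apply']
      have h1 := hstep (F^[k] x0)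
      have h2 := hα_nn _ (norm_nonneg (F^[k] x0))
      linarith
  constructor
  · -- convergence
    intro x0
    set s : ℕ → (Fin n → ℝ) := fun t => F^[t] x0 with hs
    have hrec : ∀ t, s (t + 1) = F (s t) := fun t => Function.iterate_succ_apply' F t x0
    have hanti : Antitone fun t => J (s t) := by
      apply antitone_nat_of_succ_le
      intro t
      rw [hrec]
      have h1 := hstep (s t)
      have h2 := hα_nn _ (norm_nonneg (s t))
      linarith
    have hbdd : BddBelow (Set.range fun t => J (s t)) := by
      refine ⟨0, ?_⟩
      rintro y ⟨t, rfl⟩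
      exact hJnn _
    have hJconv : Filter.Tendsto (fun t => J (s t)) Filter.atTop (nhds (⨅ t, J (s t))) :=
      tendsto_atTop_ciInf hanti hbdd
    have hshift : Filter.Tendsto (fun t => J (s (t + 1))) Filter.atTop (nhds (⨅ t, J (s t))) := by
      have := hJconv.comp (Filter.tendsto_add_atTop_nat 1)
      simpa [Function.comp_def] using this
    have hdiff : Filter.Tendsto (fun t => J (s t) - J (s (t + 1))) Filter.atTop (nhds 0) := by
      simpa using hJconv.sub hshift
    have hαtend : Filter.Tendsto (fun t => α ‖s t‖) Filter.atTop (nhds 0) := by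
      refine tendsto_of_tendsto_of_tendsto_of_le_of_le tendsto_const_nhds hdiff
        (fun t => hα_nn _ (norm_nonneg _)) (fun t => ?_)
      have h1 := hstep (s t)
      rw [← hrec t] at h1
      linarith
    have hnorm : Filter.Tendsto (fun t => ‖s t‖) Filter.atTop (nhds 0) := by
      rw [Metric.tendsto_atTop]
      intro ε hε
      obtain ⟨N, hN⟩ := Metric.tendsto_atTop.mp hαtend (α ε) (hαpos ε hε)
      refine ⟨N, fun t ht => ?_⟩
      have h1 := hN t ht
      rw [Real.dist_eq, sub_zero, abs_of_nonneg (hα_nn _ (norm_nonneg _))] at h1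
      have h2 := hkey ε hε (s t) h1
      rw [Real.dist_eq, sub_zero, abs_of_nonneg (norm_nonneg _)]
      exact h2
    exact tendsto_zero_iff_norm_tendsto_zero.mpr hnorm
  · -- stability
    intro ε hε
    have hαε := hαpos ε hε
    obtain ⟨δ, hδ, hδ'⟩ := Metric.continuousAt_iff.mp (hJcont.continuousAt (x := 0)) (α ε) hαε
    refine ⟨δ, hδ, fun x0 hx0 t => ?_⟩
    have hJx0 : J x0 < α ε := by
      have := hδ' (show dist x0 0 < δ by simpa [dist_zero_right] using hx0)
      rw [hJ0, Real.dist_eq, sub_zero, abs_of_nonneg (hJnn x0)] at this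
      exact this
    have h1 : α ‖F^[t] x0‖ ≤ J (F^[t] x0) := by
      have ha := hstep (F^[t] x0)
      have hb := hJnn (F (F^[t] x0))
      linarith
    exact hkey ε hε _ (lt_of_le_of_lt (h1.trans (hmonoJ x0 t)) hJx0)
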